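/- Γ̃(R) = Γ(R) (i.e., the two graphs on Z(R)* have the same edge set) if and only if Γ̃(T(R)) = Γ(T(R)). -/

import Mathlib

/-- x is a zero-divisor (including 0 in a nontrivial ring). -/
def IsZD {R : Type} [CommRing R] (x : R) : Prop := ∃ y : R, y ≠ 0 ∧ x * y = 0

/-- Adjacency relation of the graph Γ̃(R): xy = 0 or x + y ∈ Z(R). -/
def GTAdj {R : Type} [CommRing R] (x y : R) : Prop := x * y = 0 ∨ IsZD (x + y)

/-- Γ̃(R) is a complete graph: any two distinct nonzero zero-divisors are adjacent. -/
def GTComplete (R : Type) [CommRing R] : Prop :=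
  ∀ x y : R, IsZD x → x ≠ 0 → IsZD y → y ≠ 0 → x ≠ y → GTAdj x y

/-- Γ̃(R) = Γ(R): distinct nonzero zero-divisors are adjacent in Γ̃(R) iff
they are adjacent in the zero-divisor graph Γ(R). -/
def TildeEqGamma (R : Type) [CommRing R] : Prop :=
  ∀ x y : R, IsZD x → x ≠ 0 → IsZD y → y ≠ 0 → x ≠ y →
    ((x * y = 0 ∨ IsZD (x + y)) ↔ x * y = 0)

/-- Γ̃(R) = Z*(Γ(R)): distinct nonzero zero-divisors are adjacent in Γ̃(R) iff
they are adjacent in the total graph restricted to Z(R)*. -/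
def TildeEqZStar (R : Type) [CommRing R] : Prop :=
  ∀ x y : R, IsZD x → x ≠ 0 → IsZD y → y ≠ 0 → x ≠ y →
    ((x * y = 0 ∨ IsZD (x + y)) ↔ IsZD (x + y))

lemma zd_map_iff {R : Type} [CommRing R] (x : R) :
    IsZD ((algebraMap R (FractionRing R)) x) ↔ IsZD x := by
  have finj : Function.Injective (algebraMap R (FractionRing R)) :=
    IsFractionRing.injective R (FractionRing R)
  constructor
  · rintro ⟨q, hq, hxq⟩
    obtain ⟨b, t, rfl⟩ := IsLocalization.exists_mk'_eq (nonZeroDivisors R) q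
    have hb : b ≠ 0 := by
      rintro rfl
      exact hq (IsLocalization.mk'_zero t)
    refine ⟨b, hb, finj ?_⟩
    have := IsLocalization.mk'_spec (FractionRing R) b t
    rw [map_mul, map_zero]
    calc algebraMap R (FractionRing R) x * algebraMap R (FractionRing R) b
        = algebraMap R (FractionRing R) x * (IsLocalization.mk' (FractionRing R) b t
            * algebraMap R (FractionRing R) t) := by rw [this]
      _ = (algebraMap R (FractionRing R) x * IsLocalization.mk' (FractionRing R) b t)
            * algebraMap R (FractionRing R) t := by ring
      _ = 0 := by rw [hxq, zero_mul]
  · rintro ⟨y, hy, hxy⟩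
    refine ⟨algebraMap R (FractionRing R) y, ?_, by rw [← map_mul, hxy, map_zero]⟩
    intro h
    exact hy (finj (by rw [h, map_zero]))

theorem stmt8 (R : Type) [CommRing R] [Nontrivial R] :
    TildeEqGamma R ↔ TildeEqGamma (FractionRing R) := by
  have finj : Function.Injective (algebraMap R (FractionRing R)) :=
    IsFractionRing.injective R (FractionRing R)
  constructor
  · intro H p q hp hp0 hq hq0 hpq
    constructor
    swap
    · exact Or.inl
    rintro (h | h)
    · exact h
    obtain ⟨a, s, rfl⟩ := IsLocalization.exists_mk'_eq (nonZeroDivisors R) p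
    obtain ⟨b, t, rfl⟩ := IsLocalization.exists_mk'_eq (nonZeroDivisors R) q
    have hps : IsLocalization.mk' (FractionRing R) (a * (t : R)) (s * t) =
        IsLocalization.mk' (FractionRing R) a s := IsLocalization.mk'_cancel a s t
    have hqt : IsLocalization.mk' (FractionRing R) (b * (s : R)) (s * t) =
        IsLocalization.mk' (FractionRing R) b t := by
      rw [mul_comm s t]; exact IsLocalization.mk'_cancel b t s
    set x := a * (t : R) with hxdef
    set y := b * (s : R) with hydef
    have key : ∀ (c : R) (u : nonZeroDivisors R),
        IsZD (IsLocalization.mk' (FractionRing R) c u) → IsZD c := by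
      intro c u hzd
      rw [← zd_map_iff]
      obtain ⟨w, hw, hzw⟩ := hzd
      refine ⟨w, hw, ?_⟩
      calc algebraMap R (FractionRing R) c * w
          = (IsLocalization.mk' (FractionRing R) c u * algebraMap R (FractionRing R) u) * w := by
            rw [IsLocalization.mk'_spec]
        _ = (IsLocalization.mk' (FractionRing R) c u * w) * algebraMap R (FractionRing R) u := by
            ring
        _ = 0 := by rw [hzw, zero_mul]
    have ha0 : a ≠ 0 := by
      rintro rfl; exact hp0 (IsLocalization.mk'_zero s)
    have hb0 : b ≠ 0 := by
      rintro rfl; exact hq0 (IsLocalization.mk'_zero t)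
    have hx0 : x ≠ 0 := fun h => ha0 (t.2.2 a h)
    have hy0 : y ≠ 0 := fun h => hb0 (s.2.2 b h)
    have hxzd : IsZD x := key x (s * t) (by rw [hps]; exact hp)
    have hyzd : IsZD y := key y (s * t) (by rw [hqt]; exact hq)
    have hxy : x ≠ y := by
      intro hxyeq
      apply hpq
      rw [← hps, ← hqt, hxyeq]
    have hadd : IsLocalization.mk' (FractionRing R) (x + y) (s * t) =
        IsLocalization.mk' (FractionRing R) a s + IsLocalization.mk' (FractionRing R) b t := by
      rw [← hps, ← hqt, ← IsLocalization.mk'_add x y (s * t) (s * t), ← add_mul]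
      exact (IsLocalization.mk'_cancel _ _ _).symm
    have hsum : IsZD (x + y) := by
      refine key (x + y) (s * t) ?_
      rw [hadd]
      exact h
    have hxy0 : x * y = 0 := (H x y hxzd hx0 hyzd hy0 hxy).mp (Or.inr hsum)
    have hab : a * b = 0 := by
      refine (s * t).2.2 (a * b) ?_
      rw [Submonoid.coe_mul]
      calc a * b * ((s : R) * t) = x * y := by rw [hxdef, hydef]; ring
        _ = 0 := hxy0
    rw [← IsLocalization.mk'_mul, hab, IsLocalization.mk'_zero]
  · intro H x y hx hx0 hy hy0 hxy
    constructor
    swap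
    · exact Or.inl
    rintro (h | h)
    · exact h
    have := (H (algebraMap R (FractionRing R) x) (algebraMap R (FractionRing R) y)
      ((zd_map_iff x).mpr hx) (fun hh => hx0 (finj (by rw [hh, map_zero])))
      ((zd_map_iff y).mpr hy) (fun hh => hy0 (finj (by rw [hh, map_zero])))
      (fun hh => hxy (finj hh))).mp
      (Or.inr (by rw [← map_add]; exact (zd_map_iff _).mpr h))
    apply finj
    rw [map_mul, map_zero]
    exact this
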